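/- Let n ≥ 3, ω = exp(-4πi/n), and v : Fin n → ℂ a polygon satisfying the closed cap condition. Then the cap curve, defined by v̂_1 = v_1 and v̂_{k+1} = v̂_k + ω^(k-1)(v_{k+1} - v_k), is closed: v̂_{n+1} = v̂_1. Moreover, the k-th edge of the cap curve equals ω^(k-1) times the k-th edge of the polygon: v̂_{k+1} - v̂_k = ω^(k-1)(v_{k+1} - v_k); in particular each cap edge has the same length as the corresponding polygon edge: |v̂_{k+1} - v̂_k| = |v_{k+1} - v_k|. -/

import Mathlib

open Complex Finset

/-- if the closed cap condition holds, the cap curve is closed,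
its edges are `ω^{k-1}` times the polygon edges, and edge lengths are preserved.
Vertices 0-indexed with `v n = v 0`. -/
theorem cap_curve_closed_and_edges (n : ℕ) (hn : 3 ≤ n) (v : ℕ → ℂ) (hv : v n = v 0)
    (ω : ℂ) (hω : ω = Complex.exp (-4 * Real.pi * Complex.I / n))
    (hccc : ∑ k ∈ Finset.range n, ω ^ (k + 1) * v k = 0)
    (vhat : ℕ → ℂ)
    (hvhat0 : vhat 0 = v 0)
    (hvhat : ∀ k < n, vhat (k + 1) = vhat k + ω ^ k * (v (k + 1) - v k)) :
    vhat n = vhat 0 ∧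
    (∀ k < n, vhat (k + 1) - vhat k = ω ^ k * (v (k + 1) - v k)) ∧
    (∀ k < n, ‖vhat (k + 1) - vhat k‖ = ‖v (k + 1) - v k‖) := by
  have hn0 : (n : ℂ) ≠ 0 := by exact_mod_cast (by omega : n ≠ 0)
  have hω0 : ω ≠ 0 := by rw [hω]; exact Complex.exp_ne_zero _
  have hωn : ω ^ n = 1 := by
    rw [hω, ← Complex.exp_nat_mul]
    have : (n : ℂ) * (-4 * Real.pi * Complex.I / n) = (-2 : ℤ) * (2 * Real.pi * Complex.I) := by
      field_simp; ring
    rw [this, Complex.exp_int_mul_two_pi_mul_I]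
  have habs : ‖ω‖ = 1 := by
    have : ω = Complex.exp (((-4 * Real.pi / n : ℝ) : ℂ) * Complex.I) := by
      rw [hω]; push_cast; ring_nf
    rw [this, Complex.norm_exp_ofReal_mul_I]
  have hedge : ∀ k < n, vhat (k + 1) - vhat k = ω ^ k * (v (k + 1) - v k) := by
    intro k hk
    rw [hvhat k hk]; ring
  -- sum ω^k v k = 0
  have hS : ∑ k ∈ Finset.range n, ω ^ k * v k = 0 := by
    have : ω * ∑ k ∈ Finset.range n, ω ^ k * v k = 0 := by
      rw [Finset.mul_sum, ← hccc]
      exact Finset.sum_congr rfl fun k _ => by ring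
    rcases mul_eq_zero.mp this with h | h
    · exact absurd h hω0
    · exact h
  have hclosed : vhat n = vhat 0 := by
    have htel : vhat n - vhat 0 = ∑ k ∈ Finset.range n, (vhat (k + 1) - vhat k) :=
      (Finset.sum_range_sub vhat n).symm
    have htel2 : vhat n - vhat 0 = ∑ k ∈ Finset.range n, ω ^ k * (v (k + 1) - v k) := by
      rw [htel]
      exact Finset.sum_congr rfl fun k hk => hedge k (Finset.mem_range.mp hk)
    have hmul : ω * (vhat n - vhat 0) = 0 := by
      rw [htel2, Finset.mul_sum]
      have : ∀ k ∈ Finset.range n, ω * (ω ^ k * (v (k + 1) - v k)) =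
          ω ^ (k + 1) * v (k + 1) - ω ^ (k + 1) * v k := by
        intro k _; ring
      rw [Finset.sum_congr rfl this, Finset.sum_sub_distrib, hccc, sub_zero]
      have h1 : ∑ k ∈ Finset.range n, ω ^ (k + 1) * v (k + 1)
          = ∑ k ∈ Finset.range (n + 1), ω ^ k * v k - ω ^ 0 * v 0 := by
        rw [Finset.sum_range_succ' (fun k => ω ^ k * v k) n]
        ring
      rw [h1, Finset.sum_range_succ, hS, hωn, hv]
      ring
    rcases mul_eq_zero.mp hmul with h | h
    · exact absurd h hω0
    · exact sub_eq_zero.mp h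
  refine ⟨hclosed, hedge, fun k hk => ?_⟩
  rw [hedge k hk, norm_mul, norm_pow, habs, one_pow, one_mul]
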